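/- For every finite directed graph G and every integer s ≥ 2: g(G,s) = E(G,s) ≥ E^public(G,s) ≥ g^public(G,s); in particular the guessing number of G is at least the public guessing number of G. -/

import Mathlib

open Finset

/-! ## Basic setup: directed graphs, guessing games, entropy (Riis, "Graph Entropy,
Network Coding and Guessing games"). -/

/-- The set `N⁻(j)` of in-neighbours of a vertex `j` in the directed graph given by
the edge relation `E` (an edge `(i,j)` is `E i j`). -/
def inNbr {V : Type*} [Fintype V] (E : V → V → Prop) [DecidableRel E] (j : V) : Finset V :=
  Finset.univ.filter (fun i => E i j)

/-- `p` is a probability distribution on `V → A`. -/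
def IsProbDist {V A : Type*} [Fintype V] [DecidableEq V] [Fintype A] (p : (V → A) → ℝ) : Prop :=
  (∀ x, 0 ≤ p x) ∧ ∑ x : V → A, p x = 1

/-- The marginal probability, under `p`, that the coordinates in `S` agree with `y`. -/
noncomputable def marginalPMF {V A : Type*} [Fintype V] [DecidableEq V] [Fintype A] [DecidableEq A]
    (p : (V → A) → ℝ) (S : Finset V) (y : ↥S → A) : ℝ :=
  ∑ x : V → A, if ∀ i : ↥S, x i.1 = y i then p x else 0

/-- `Hent s p S` : the base-`s` Shannon entropy of the marginal of `p` on the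
coordinates in `S` (using `Real.negMulLog`, so the convention `0·log(1/0) = 0` holds). -/
noncomputable def Hent {V A : Type*} [Fintype V] [DecidableEq V] [Fintype A] [DecidableEq A]
    (s : ℕ) (p : (V → A) → ℝ) (S : Finset V) : ℝ :=
  (∑ y : ↥S → A, Real.negMulLog (marginalPMF p S y)) / Real.log s

/-- `p` satisfies the information constraints of the graph: `H(j | N⁻(j)) = 0` for every
vertex `j`, where `H(X | Y) = H(X ∪ Y) − H(Y)`. -/
def InfoConstraints {V A : Type*} [Fintype V] [DecidableEq V] [Fintype A] [DecidableEq A]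
    (E : V → V → Prop) [DecidableRel E] (s : ℕ) (p : (V → A) → ℝ) : Prop :=
  ∀ j : V, Hent s p (insert j (inNbr E j)) - Hent s p (inNbr E j) = 0

/-- The (private) entropy `E(G,s)` of the graph over an alphabet of size `s`:
the sup of `H_p(V)` over probability distributions on `A^V` (`A = Fin s`)
satisfying the information constraints of the graph. -/
noncomputable def graphEntropy {V : Type*} [Fintype V] [DecidableEq V]
    (E : V → V → Prop) [DecidableRel E] (s : ℕ) : ℝ :=
  sSup {h : ℝ | ∃ p : (V → Fin s) → ℝ,
    IsProbDist p ∧ InfoConstraints E s p ∧ h = Hent s p Finset.univ}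

/-- The general entropy `E(G) = sup_{s ≥ 2} E(G,s)`. -/
noncomputable def genEntropy {V : Type*} [Fintype V] [DecidableEq V]
    (E : V → V → Prop) [DecidableRel E] : ℝ :=
  sSup {h : ℝ | ∃ s : ℕ, 2 ≤ s ∧ h = graphEntropy E s}

/-- A guessing strategy: each vertex `j` guesses a value `g j x` which may only depend on
the values `x i` for in-neighbours `i` of `j`. -/
def IsStrategy {V A : Type*} (E : V → V → Prop) (g : V → (V → A) → A) : Prop :=
  ∀ j x y, (∀ i, E i j → x i = y i) → g j x = g j y

/-- The set of assignments at which all players guess correctly. -/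
def correctSet {V A : Type*} [Fintype V] [DecidableEq V] [Fintype A] [DecidableEq A]
    (g : V → (V → A) → A) : Finset (V → A) :=
  Finset.univ.filter (fun x => ∀ j, g j x = x j)

/-- The maximal number of assignments at which all players guess correctly,
over all guessing strategies (over the alphabet `Fin s`). -/
noncomputable def maxCorrect {V : Type*} [Fintype V] [DecidableEq V]
    (E : V → V → Prop) [DecidableRel E] (s : ℕ) : ℕ :=
  sSup {m : ℕ | ∃ g : V → (V → Fin s) → Fin s, IsStrategy E g ∧ m = (correctSet g).card}

/-- The maximal probability (with `x` uniform on `A^V`) that all players guess correctly. -/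
noncomputable def maxProb {V : Type*} [Fintype V] [DecidableEq V]
    (E : V → V → Prop) [DecidableRel E] (s : ℕ) : ℝ :=
  (maxCorrect E s : ℝ) / (s : ℝ) ^ Fintype.card V

/-- The guessing number `g(G,s)`: the unique `α` with maximal success probability
`(1/s)^(n−α)`, i.e. `α = n + log_s (maximal probability)`. -/
noncomputable def guessingNumber {V : Type*} [Fintype V] [DecidableEq V]
    (E : V → V → Prop) [DecidableRel E] (s : ℕ) : ℝ :=
  (Fintype.card V : ℝ) + Real.logb s (maxProb E s)

/-- The general guessing number `g(G) = sup_{s ≥ 2} g(G,s)`. -/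
noncomputable def genGuessing {V : Type*} [Fintype V] [DecidableEq V]
    (E : V → V → Prop) [DecidableRel E] : ℝ :=
  sSup {h : ℝ | ∃ s : ℕ, 2 ≤ s ∧ h = guessingNumber E s}

/-! ## Entropy-like functions -/

/-- An S-entropy-like function: `f ∅ = 0`, monotone and submodular (the polymatroidal
axioms, equivalently Shannon's information inequalities). -/
def SEntLike {U : Type*} [DecidableEq U] (f : Finset U → ℝ) : Prop :=
  f ∅ = 0 ∧ (∀ X Y, X ⊆ Y → f X ≤ f Y) ∧ ∀ X Y, f (X ∩ Y) + f (X ∪ Y) ≤ f X + f Y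

/-- Mutual information `I_f(X;Y|Z)` of an entropy-like function. -/
def mutI {U : Type*} [DecidableEq U] (f : Finset U → ℝ) (X Y Z : Finset U) : ℝ :=
  f (X ∪ Z) + f (Y ∪ Z) - f (X ∪ Y ∪ Z) - f Z

/-- A Zhang–Yeung entropy-like function: S-entropy-like and satisfying the ZY
non-Shannon information inequality for all `A B C D`. -/
def ZYEntLike {U : Type*} [DecidableEq U] (f : Finset U → ℝ) : Prop :=
  SEntLike f ∧ ∀ A B C D : Finset U,
    2 * mutI f C D ∅ ≤ mutI f A B ∅ + mutI f A (C ∪ D) ∅ + 3 * mutI f C D A + mutI f C D B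

/-- `f` satisfies the information constraints of the graph:
`f(N⁻(j) ∪ {j}) = f(N⁻(j))` for every vertex `j`. -/
def FConstraints {V : Type*} [Fintype V] [DecidableEq V]
    (E : V → V → Prop) [DecidableRel E] (f : Finset V → ℝ) : Prop :=
  ∀ j : V, f (insert j (inNbr E j)) = f (inNbr E j)

/-- The S-entropy `E_S(G)`: the maximal value of `f(V)` over normalized S-entropy-like
functions satisfying the information constraints of `G`. -/
noncomputable def SEnt {V : Type*} [Fintype V] [DecidableEq V]
    (E : V → V → Prop) [DecidableRel E] : ℝ :=
  sSup {h : ℝ | ∃ f : Finset V → ℝ,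
    SEntLike f ∧ (∀ j : V, f {j} ≤ 1) ∧ FConstraints E f ∧ h = f Finset.univ}

/-- The ZY-entropy `E_ZY(G)`. -/
noncomputable def ZYEnt {V : Type*} [Fintype V] [DecidableEq V]
    (E : V → V → Prop) [DecidableRel E] : ℝ :=
  sSup {h : ℝ | ∃ f : Finset V → ℝ,
    ZYEntLike f ∧ (∀ j : V, f {j} ≤ 1) ∧ FConstraints E f ∧ h = f Finset.univ}

/-! ## Acyclicity -/

/-- The subgraph induced on `S` is acyclic: no directed cycle within `S`. -/
def AcyclicOn {V : Type*} (E : V → V → Prop) (S : Finset V) : Prop :=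
  ∀ v ∈ S, ¬ Relation.TransGen (fun a b => a ∈ S ∧ b ∈ S ∧ E a b) v v

/-- The acyclic independence number: the maximal size of a vertex set inducing an
acyclic subgraph. -/
noncomputable def acycIndepNum {V : Type*} [Fintype V] (E : V → V → Prop) : ℕ :=
  sSup {k : ℕ | ∃ S : Finset V, AcyclicOn E S ∧ k = S.card}

/-! ## Index codes -/

/-- An index code protocol: a broadcast map `Φ` together with decoding functions `d j`
(depending only on the in-neighbour values and the broadcast message) recovering `x j`. -/
def IsIndexCode {V A W : Type*} (E : V → V → Prop)
    (Φ : (V → A) → W) (d : V → (V → A) → W → A) : Prop :=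
  (∀ (j : V) (x y : V → A) (w : W), (∀ i, E i j → x i = y i) → d j x w = d j y w) ∧
  ∀ (x : V → A) (j : V), d j x (Φ x) = x j

/-- The length `log_s |Φ(A^V)|` of an index code protocol. -/
noncomputable def protocolLength {V A W : Type*} [Fintype V] [DecidableEq V] [Fintype A]
    [Fintype W] [DecidableEq W] (s : ℕ) (Φ : (V → A) → W) : ℝ :=
  Real.logb s ((Finset.univ.image Φ).card)

/-- The base-`s` entropy of the broadcast message `Φ(x)` for `x` uniform on `A^V`. -/
noncomputable def protocolEntropy {V A W : Type*} [Fintype V] [DecidableEq V] [Fintype A]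
    [DecidableEq A] [Fintype W] [DecidableEq W] (s : ℕ) (Φ : (V → A) → W) : ℝ :=
  (∑ w : W, Real.negMulLog
    (((Finset.univ.filter (fun x : V → A => Φ x = w)).card : ℝ) / (s : ℝ) ^ Fintype.card V))
    / Real.log s

/-- `i(G,s)`: the minimal length of an index code for `G` over `Fin s`. -/
noncomputable def indexCodeLen {V : Type*} [Fintype V] [DecidableEq V]
    (E : V → V → Prop) [DecidableRel E] (s : ℕ) : ℝ :=
  sInf {h : ℝ | ∃ (W : Type) (iW : Fintype W) (dW : DecidableEq W)
    (Φ : (V → Fin s) → W) (d : V → (V → Fin s) → W → Fin s),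
    IsIndexCode E Φ d ∧ h = @protocolLength V (Fin s) W _ _ _ iW dW s Φ}

/-- `i_entro(G,s)`: the minimal entropy of an index code for `G` over `Fin s`. -/
noncomputable def indexCodeEntro {V : Type*} [Fintype V] [DecidableEq V]
    (E : V → V → Prop) [DecidableRel E] (s : ℕ) : ℝ :=
  sInf {h : ℝ | ∃ (W : Type) (iW : Fintype W) (dW : DecidableEq W)
    (Φ : (V → Fin s) → W) (d : V → (V → Fin s) → W → Fin s),
    IsIndexCode E Φ d ∧ h = @protocolEntropy V (Fin s) W _ _ _ _ iW dW s Φ}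

/-- The information constraints on `V ∪ {w}` (`w = none`) used to define the S/ZY-minimal
index code: `f(N⁻(j) ∪ {w} ∪ {j}) = f(N⁻(j) ∪ {w})` for each `j`, `f(V ∪ {w}) = f(V)`
and `f(V) = n`. -/
def WConstraints {V : Type*} [Fintype V] [DecidableEq V]
    (E : V → V → Prop) [DecidableRel E] (f : Finset (Option V) → ℝ) : Prop :=
  (∀ j : V, f (insert (some j) (insert none ((inNbr E j).image some)))
      = f (insert none ((inNbr E j).image some))) ∧
  f (insert none ((Finset.univ : Finset V).image some))
      = f ((Finset.univ : Finset V).image some) ∧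
  f ((Finset.univ : Finset V).image some) = (Fintype.card V : ℝ)

/-- The S-minimal index code `i_S(G)`. -/
noncomputable def iS {V : Type*} [Fintype V] [DecidableEq V]
    (E : V → V → Prop) [DecidableRel E] : ℝ :=
  sInf {h : ℝ | ∃ f : Finset (Option V) → ℝ,
    SEntLike f ∧ (∀ j : V, f {some j} ≤ 1) ∧ WConstraints E f ∧ h = f {none}}

/-- The ZY-minimal index code `i_ZY(G)`. -/
noncomputable def iZY {V : Type*} [Fintype V] [DecidableEq V]
    (E : V → V → Prop) [DecidableRel E] : ℝ :=
  sInf {h : ℝ | ∃ f : Finset (Option V) → ℝ,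
    ZYEntLike f ∧ (∀ j : V, f {some j} ≤ 1) ∧ WConstraints E f ∧ h = f {none}}

/-! ## The bidirected pentagon `C5` -/

/-- The pentagon with bidirected edges: vertices `Fin 5`, edges between cyclically
adjacent vertices. -/
def E5 : Fin 5 → Fin 5 → Prop := fun i j => (i.1 + 1) % 5 = j.1 ∨ (j.1 + 1) % 5 = i.1

instance : DecidableRel E5 := fun i j => by unfold E5; infer_instance
/-! ## Auxiliary lemmas for the proof -/

namespace RiisAux

open Real Finset

/-- Term bound: `-(a log T) ≤ negMulLog a` when `0 ≤ a ≤ T`. -/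
lemma term_le {a T : ℝ} (ha : 0 ≤ a) (haT : a ≤ T) :
    -(a * Real.log T) ≤ Real.negMulLog a := by
  rcases eq_or_lt_of_le ha with h | h
  · simp [← h, Real.negMulLog]
  · simp only [Real.negMulLog_def]
    have hlog := Real.log_le_log h haT
    nlinarith

lemma term_lt {a T : ℝ} (ha : 0 < a) (haT : a < T) :
    -(a * Real.log T) < Real.negMulLog a := by
  simp only [Real.negMulLog_def]
  have hlog := Real.log_lt_log ha haT
  nlinarith

lemma negMulLog_total {ι : Type*} (t : Finset ι) (f : ι → ℝ) :
    Real.negMulLog (∑ i ∈ t, f i) = ∑ i ∈ t, -(f i * Real.log (∑ j ∈ t, f j)) := by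
  simp only [Real.negMulLog_def, neg_mul]
  rw [Finset.sum_neg_distrib, ← Finset.sum_mul]

lemma negMulLog_sum_le {ι : Type*} (t : Finset ι) (f : ι → ℝ) (hf : ∀ i ∈ t, 0 ≤ f i) :
    Real.negMulLog (∑ i ∈ t, f i) ≤ ∑ i ∈ t, Real.negMulLog (f i) := by
  rw [negMulLog_total]
  exact Finset.sum_le_sum fun i hi =>
    term_le (hf i hi) (Finset.single_le_sum hf hi)

lemma negMulLog_sum_lt {ι : Type*} (t : Finset ι) (f : ι → ℝ) (hf : ∀ i ∈ t, 0 ≤ f i)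
    {a b : ι} (ha : a ∈ t) (hb : b ∈ t) (hab : a ≠ b) (hfa : 0 < f a) (hfb : 0 < f b) :
    Real.negMulLog (∑ i ∈ t, f i) < ∑ i ∈ t, Real.negMulLog (f i) := by
  classical
  rw [negMulLog_total]
  refine Finset.sum_lt_sum (fun i hi => term_le (hf i hi) (Finset.single_le_sum hf hi))
    ⟨a, ha, term_lt hfa ?_⟩
  calc f a < f a + f b := by linarith
  _ = ∑ i ∈ {a, b}, f i := by rw [Finset.sum_pair hab]
  _ ≤ ∑ j ∈ t, f j := Finset.sum_le_sum_of_subset_of_nonneg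
      (by intro i hi; rcases Finset.mem_insert.mp hi with h | h
          · exact h ▸ ha
          · exact (Finset.mem_singleton.mp h) ▸ hb)
      (fun i hi _ => hf i hi)

lemma negMulLog_sum_eq {ι : Type*} (t : Finset ι) (f : ι → ℝ)
    (h : ∀ i ∈ t, ∀ j ∈ t, f i ≠ 0 → f j ≠ 0 → i = j) :
    Real.negMulLog (∑ i ∈ t, f i) = ∑ i ∈ t, Real.negMulLog (f i) := by
  by_cases hz : ∀ i ∈ t, f i = 0
  · rw [Finset.sum_eq_zero hz, Real.negMulLog_zero,
      Finset.sum_eq_zero fun i hi => by rw [hz i hi, Real.negMulLog_zero]]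
  · push_neg at hz
    obtain ⟨a, ha, hfa⟩ := hz
    rw [Finset.sum_eq_single a (fun b hb hba => by
        by_contra h'
        exact hba (h b hb a ha h' hfa)) (fun h' => absurd ha h'),
      Finset.sum_eq_single a (fun b hb hba => by
        by_contra h'
        have : f b ≠ 0 := fun h0 => h' (by rw [h0, Real.negMulLog_zero])
        exact hba (h b hb a ha this hfa)) (fun h' => absurd ha h')]

/-- Shannon entropy is at most `log` of the support size. -/
lemma sum_negMulLog_le_log_card {ι : Type*} [Fintype ι] (f : ι → ℝ)
    (hf : ∀ i, 0 ≤ f i) (hsum : ∑ i, f i = 1) :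
    ∑ i, Real.negMulLog (f i)
      ≤ Real.log ((Finset.univ.filter (fun i => f i ≠ 0)).card) := by
  classical
  set t := Finset.univ.filter (fun i : ι => f i ≠ 0) with ht
  have hsum_t : ∑ i ∈ t, f i = 1 := by
    rw [← hsum]
    exact Finset.sum_filter_of_ne (fun i _ h => h)
  have htne : t.Nonempty := by
    rcases Finset.exists_ne_zero_of_sum_ne_zero (hsum ▸ one_ne_zero) with ⟨i, -, hi⟩
    exact ⟨i, Finset.mem_filter.mpr ⟨Finset.mem_univ i, hi⟩⟩
  have hK : (0 : ℝ) < (t.card : ℝ) := by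
    exact_mod_cast Finset.card_pos.mpr htne
  have hmain : ∑ i ∈ t, Real.negMulLog (f i)
      ≤ ∑ i ∈ t, (((t.card : ℝ))⁻¹ - f i + f i * Real.log t.card) := by
    refine Finset.sum_le_sum fun i hi => ?_
    have hfi : 0 < f i := lt_of_le_of_ne (hf i) (Ne.symm (Finset.mem_filter.mp hi).2)
    have hx : (0:ℝ) < ((t.card : ℝ) * f i)⁻¹ := by positivity
    have hlog := Real.log_le_sub_one_of_pos hx
    rw [Real.log_inv, Real.log_mul (ne_of_gt hK) (ne_of_gt hfi)] at hlog
    rw [Real.negMulLog_def]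
    have h2 : f i * (-(Real.log t.card + Real.log (f i)))
        ≤ f i * (((t.card : ℝ) * f i)⁻¹ - 1) :=
      mul_le_mul_of_nonneg_left hlog (le_of_lt hfi)
    have h3 : f i * ((t.card : ℝ) * f i)⁻¹ = ((t.card : ℝ))⁻¹ := by
      rw [mul_inv]
      field_simp
    nlinarith [h2, h3]
  have hzero : ∑ i, Real.negMulLog (f i) = ∑ i ∈ t, Real.negMulLog (f i) := by
    refine (Finset.sum_filter_of_ne (fun i _ h h0 => ?_)).symm
    exact h (by rw [h0, Real.negMulLog_zero])
  rw [hzero]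
  calc ∑ i ∈ t, Real.negMulLog (f i)
      ≤ ∑ i ∈ t, (((t.card : ℝ))⁻¹ - f i + f i * Real.log t.card) := hmain
  _ = t.card * ((t.card : ℝ))⁻¹ - 1 + Real.log t.card := by
      rw [Finset.sum_add_distrib, Finset.sum_sub_distrib, ← Finset.sum_mul,
        Finset.sum_const, hsum_t]
      push_cast
      ring
  _ = Real.log t.card := by
      field_simp
      ring

/-- Min-entropy bound: `-log M ≤ H` when all probabilities are `≤ M`. -/
lemma neg_log_max_le_sum_negMulLog {ι : Type*} [Fintype ι] (f : ι → ℝ)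
    (hf : ∀ i, 0 ≤ f i) (hsum : ∑ i, f i = 1) {M : ℝ} (hM : 0 < M)
    (hle : ∀ i, f i ≤ M) :
    -Real.log M ≤ ∑ i, Real.negMulLog (f i) := by
  have : ∀ i, -(f i * Real.log M) ≤ Real.negMulLog (f i) :=
    fun i => term_le (hf i) (hle i)
  calc -Real.log M = ∑ i, -(f i * Real.log M) := by
        rw [Finset.sum_neg_distrib, ← Finset.sum_mul, hsum, one_mul]
  _ ≤ ∑ i, Real.negMulLog (f i) := Finset.sum_le_sum fun i _ => this i

end RiisAux

namespace RiisAux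

open Real Finset

variable {V A : Type*} [Fintype V] [DecidableEq V] [Fintype A] [DecidableEq A]

lemma marginal_nonneg (p : (V → A) → ℝ) (hp : ∀ x, 0 ≤ p x) (S : Finset V) (y : ↥S → A) :
    0 ≤ marginalPMF p S y := by
  refine Finset.sum_nonneg fun x _ => ?_
  split
  · exact hp x
  · exact le_refl 0

/-- Grouping: the marginal on `S ⊆ T` is obtained from the marginal on `T` by summing
over the fibers of the restriction map. -/
lemma marginal_restrict (p : (V → A) → ℝ) {S T : Finset V} (hST : S ⊆ T) (z : ↥S → A) :
    marginalPMF p S z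
      = ∑ y ∈ Finset.univ.filter
          (fun y : ↥T → A => (fun i : ↥S => y ⟨i.1, hST i.2⟩) = z),
          marginalPMF p T y := by
  unfold marginalPMF
  rw [Finset.sum_filter]
  have hswap : ∀ (c : Prop) [Decidable c] (g : (V → A) → ℝ),
      (if c then ∑ x, g x else 0) = ∑ x, if c then g x else 0 := by
    intro c _ g
    split <;> simp
  simp only [hswap]
  rw [Finset.sum_comm]
  refine Finset.sum_congr rfl fun x _ => ?_
  rw [Finset.sum_eq_single (fun i : ↥T => x i.1)]
  · have hc2 : (∀ i : ↥T, x i.1 = (fun i : ↥T => x i.1) i) := fun i => rfl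
    rw [if_pos hc2]
    congr 1
    rw [eq_iff_iff]
    constructor
    · intro h
      funext i
      exact h i
    · intro h i
      exact congrFun h i
  · intro y _ hy
    have : ¬ (∀ i : ↥T, x i.1 = y i) := fun hc => hy (funext fun i => (hc i).symm)
    rw [if_neg this, ite_self]
  · intro h
    exact absurd (Finset.mem_univ _) h

lemma entSum_decomp (p : (V → A) → ℝ) {S T : Finset V} (hST : S ⊆ T) :
    (∑ y : ↥T → A, Real.negMulLog (marginalPMF p T y))
      = ∑ z : ↥S → A, ∑ y ∈ Finset.univ.filter
          (fun y : ↥T → A => (fun i : ↥S => y ⟨i.1, hST i.2⟩) = z),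
          Real.negMulLog (marginalPMF p T y) :=
  (Finset.sum_fiberwise _ _ _).symm

lemma entSum_le (p : (V → A) → ℝ) (hp : ∀ x, 0 ≤ p x) {S T : Finset V} (hST : S ⊆ T) :
    ∑ z : ↥S → A, Real.negMulLog (marginalPMF p S z)
      ≤ ∑ y : ↥T → A, Real.negMulLog (marginalPMF p T y) := by
  rw [entSum_decomp p hST]
  refine Finset.sum_le_sum fun z _ => ?_
  rw [marginal_restrict p hST z]
  exact negMulLog_sum_le _ _ fun y _ => marginal_nonneg p hp T y

lemma exists_of_marginal_ne_zero (p : (V → A) → ℝ) (T : Finset V) (y : ↥T → A)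
    (h : marginalPMF p T y ≠ 0) :
    ∃ x : V → A, p x ≠ 0 ∧ ∀ i : ↥T, x i.1 = y i := by
  obtain ⟨x, -, hx⟩ := Finset.exists_ne_zero_of_sum_ne_zero h
  by_cases hc : ∀ i : ↥T, x i.1 = y i
  · exact ⟨x, by rwa [if_pos hc] at hx, hc⟩
  · rw [if_neg hc] at hx
    exact absurd rfl hx

lemma entSum_eq_of_det (p : (V → A) → ℝ) {S T : Finset V} (hST : S ⊆ T)
    (det : ∀ x y : V → A, p x ≠ 0 → p y ≠ 0 →
      (∀ i ∈ S, x i = y i) → ∀ i ∈ T, x i = y i) :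
    ∑ z : ↥S → A, Real.negMulLog (marginalPMF p S z)
      = ∑ y : ↥T → A, Real.negMulLog (marginalPMF p T y) := by
  rw [entSum_decomp p hST]
  refine Finset.sum_congr rfl fun z _ => ?_
  rw [marginal_restrict p hST z]
  refine negMulLog_sum_eq _ _ fun y1 hy1 y2 hy2 h1 h2 => ?_
  obtain ⟨x1, hx1, hx1r⟩ := exists_of_marginal_ne_zero p T y1 h1
  obtain ⟨x2, hx2, hx2r⟩ := exists_of_marginal_ne_zero p T y2 h2
  have hz1 := (Finset.mem_filter.mp hy1).2
  have hz2 := (Finset.mem_filter.mp hy2).2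
  have hagree : ∀ i ∈ S, x1 i = x2 i := by
    intro i hi
    have e1 : x1 i = y1 ⟨i, hST hi⟩ := hx1r ⟨i, hST hi⟩
    have e2 : x2 i = y2 ⟨i, hST hi⟩ := hx2r ⟨i, hST hi⟩
    have e3 : y1 ⟨i, hST hi⟩ = z ⟨i, hi⟩ := congrFun hz1 ⟨i, hi⟩
    have e4 : y2 ⟨i, hST hi⟩ = z ⟨i, hi⟩ := congrFun hz2 ⟨i, hi⟩
    rw [e1, e2, e3, e4]
  have hT := det x1 x2 hx1 hx2 hagree
  funext i
  rw [← hx1r i, ← hx2r i]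
  exact hT i.1 i.2

lemma marginal_pos_of_mem (p : (V → A) → ℝ) (hp : ∀ x, 0 ≤ p x) (T : Finset V)
    (x : V → A) (hx : p x ≠ 0) :
    0 < marginalPMF p T (fun i => x i.1) := by
  have hterm : (if (∀ i : ↥T, x i.1 = (fun i : ↥T => x i.1) i) then p x else 0) = p x :=
    if_pos fun i => rfl
  calc (0:ℝ) < p x := lt_of_le_of_ne (hp x) (Ne.symm hx)
  _ = (if (∀ i : ↥T, x i.1 = (fun i : ↥T => x i.1) i) then p x else 0) := hterm.symm
  _ ≤ marginalPMF p T (fun i => x i.1) := by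
      unfold marginalPMF
      refine Finset.single_le_sum
        (f := fun w : V → A =>
          if (∀ i : ↥T, w i.1 = (fun i : ↥T => x i.1) i) then p w else 0)
        (fun w _ => ?_) (Finset.mem_univ x)
      dsimp only
      split
      · exact hp w
      · exact le_refl 0

lemma det_of_entSum_ge (p : (V → A) → ℝ) (hp : ∀ x, 0 ≤ p x) {S T : Finset V} (hST : S ⊆ T)
    (hent : ∑ y : ↥T → A, Real.negMulLog (marginalPMF p T y)
      ≤ ∑ z : ↥S → A, Real.negMulLog (marginalPMF p S z)) :
    ∀ x y : V → A, p x ≠ 0 → p y ≠ 0 →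
      (∀ i ∈ S, x i = y i) → ∀ i ∈ T, x i = y i := by
  by_contra hcon
  push_neg at hcon
  obtain ⟨x1, x2, hx1, hx2, hagree, i0, hi0T, hne⟩ := hcon
  set y1 : ↥T → A := fun i => x1 i.1 with hy1def
  set y2 : ↥T → A := fun i => x2 i.1 with hy2def
  have hy12 : y1 ≠ y2 := fun h => hne (congrFun h ⟨i0, hi0T⟩)
  set z0 : ↥S → A := fun i => x1 i.1 with hz0def
  have hy1mem : y1 ∈ Finset.univ.filter
      (fun y : ↥T → A => (fun i : ↥S => y ⟨i.1, hST i.2⟩) = z0) :=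
    Finset.mem_filter.mpr ⟨Finset.mem_univ _, rfl⟩
  have hy2mem : y2 ∈ Finset.univ.filter
      (fun y : ↥T → A => (fun i : ↥S => y ⟨i.1, hST i.2⟩) = z0) := by
    refine Finset.mem_filter.mpr ⟨Finset.mem_univ _, funext fun i => ?_⟩
    exact (hagree i.1 i.2).symm
  have hm1 : 0 < marginalPMF p T y1 := marginal_pos_of_mem p hp T x1 hx1
  have hm2 : 0 < marginalPMF p T y2 := marginal_pos_of_mem p hp T x2 hx2
  have hlt : ∑ z : ↥S → A, Real.negMulLog (marginalPMF p S z)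
      < ∑ y : ↥T → A, Real.negMulLog (marginalPMF p T y) := by
    rw [entSum_decomp p hST]
    refine Finset.sum_lt_sum (fun z _ => ?_) ⟨z0, Finset.mem_univ _, ?_⟩
    · rw [marginal_restrict p hST z]
      exact negMulLog_sum_le _ _ fun y _ => marginal_nonneg p hp T y
    · rw [marginal_restrict p hST z0]
      exact negMulLog_sum_lt _ _ (fun y _ => marginal_nonneg p hp T y)
        hy1mem hy2mem hy12 hm1 hm2
  linarith

/-- The entropy sum over all of `V` is the entropy of `p` itself. -/
lemma entSum_univ (p : (V → A) → ℝ) :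
    ∑ y : ↥(Finset.univ : Finset V) → A, Real.negMulLog (marginalPMF p Finset.univ y)
      = ∑ x : V → A, Real.negMulLog (p x) := by
  have h1 : ∀ y : ↥(Finset.univ : Finset V) → A,
      marginalPMF p Finset.univ y = p (fun v => y ⟨v, Finset.mem_univ v⟩) := by
    intro y
    unfold marginalPMF
    rw [Finset.sum_eq_single (fun v => y ⟨v, Finset.mem_univ v⟩)]
    · rw [if_pos]
      intro i
      exact congrArg y (Subtype.eta _ _)
    · intro x _ hx
      rw [if_neg]
      intro hc
      exact hx (funext fun v => hc ⟨v, Finset.mem_univ v⟩)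
    · intro h
      exact absurd (Finset.mem_univ _) h
  simp_rw [h1]
  refine Fintype.sum_bijective (fun y : ↥(Finset.univ : Finset V) → A =>
    (fun v => y ⟨v, Finset.mem_univ v⟩)) ⟨?_, ?_⟩ _ _ (fun y => rfl)
  · intro y y' h
    funext i
    have := congrFun h i.1
    simpa [Subtype.eta] using this
  · intro x
    exact ⟨fun i => x i.1, rfl⟩

end RiisAux

namespace RiisAux

open Real Finset

variable {V A : Type*} [Fintype V] [DecidableEq V] [Fintype A] [DecidableEq A]

/-- The uniform distribution on a finite set of assignments. -/
noncomputable def unif (C : Finset (V → A)) : (V → A) → ℝ :=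
  fun x => if x ∈ C then (C.card : ℝ)⁻¹ else 0

lemma unif_probDist (C : Finset (V → A)) (hC : C.Nonempty) : IsProbDist (unif C) := by
  have hcard : (0:ℝ) < C.card := by exact_mod_cast Finset.card_pos.mpr hC
  constructor
  · intro x
    unfold unif
    split
    · positivity
    · exact le_refl 0
  · unfold unif
    rw [Finset.sum_ite_mem, Finset.univ_inter, Finset.sum_const, nsmul_eq_mul]
    field_simp

lemma unif_ne_zero_iff (C : Finset (V → A)) (hC : C.Nonempty) (x : V → A) :
    unif C x ≠ 0 ↔ x ∈ C := by
  have hcard : (0:ℝ) < ((C.card : ℝ))⁻¹ := by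
    have : (0:ℝ) < C.card := by exact_mod_cast Finset.card_pos.mpr hC
    positivity
  unfold unif
  by_cases hx : x ∈ C
  · simp [hx, ne_of_gt hcard]
  · simp [hx]

lemma unif_entSum (C : Finset (V → A)) (hC : C.Nonempty) :
    ∑ x : V → A, Real.negMulLog (unif C x) = Real.log C.card := by
  have hcard : (0:ℝ) < C.card := by exact_mod_cast Finset.card_pos.mpr hC
  unfold unif
  have hsplit : ∀ x : V → A,
      Real.negMulLog (if x ∈ C then (C.card : ℝ)⁻¹ else 0)
        = if x ∈ C then Real.negMulLog ((C.card : ℝ)⁻¹) else 0 := by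
    intro x
    split <;> simp [Real.negMulLog_zero]
  simp_rw [hsplit]
  rw [Finset.sum_ite_mem, Finset.univ_inter, Finset.sum_const, nsmul_eq_mul]
  simp only [Real.negMulLog_def]
  rw [Real.log_inv]
  field_simp

/-- A helper to extract equality of entropy sums from `Hent` differences. -/
lemma eq_of_div_sub_eq_zero {a b L : ℝ} (hL : L ≠ 0) (h : a / L - b / L = 0) : a = b := by
  rw [div_sub_div_same, div_eq_zero_iff] at h
  rcases h with h | h
  · linarith
  · exact absurd h hL

section Strategy

variable (E : V → V → Prop) [DecidableRel E]

/-- Auxiliary choice function for building a strategy from a distribution. -/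
noncomputable def detAux (p : (V → A) → ℝ) [Nonempty A] (j : V)
    (t : ↥(inNbr E j) → A) : A :=
  letI := Classical.dec (∃ z : V → A, p z ≠ 0 ∧ ∀ i : ↥(inNbr E j), z i.1 = t i)
  if h : ∃ z : V → A, p z ≠ 0 ∧ ∀ i : ↥(inNbr E j), z i.1 = t i then h.choose j
  else Classical.arbitrary A

/-- The strategy induced by a distribution. -/
noncomputable def detStrategy (p : (V → A) → ℝ) [Nonempty A] : V → (V → A) → A :=
  fun j x => detAux E p j (fun i => x i.1)

lemma detStrategy_isStrategy (p : (V → A) → ℝ) [Nonempty A] :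
    IsStrategy E (detStrategy E p) := by
  intro j x y hxy
  unfold detStrategy
  congr 1
  funext i
  exact hxy i.1 ((Finset.mem_filter.mp i.2).2)

lemma detStrategy_correct (p : (V → A) → ℝ) [Nonempty A]
    (det : ∀ j : V, ∀ x y : V → A, p x ≠ 0 → p y ≠ 0 →
      (∀ i ∈ inNbr E j, x i = y i) → ∀ i ∈ insert j (inNbr E j), x i = y i)
    (x : V → A) (hx : p x ≠ 0) : x ∈ correctSet (detStrategy E p) := by
  refine Finset.mem_filter.mpr ⟨Finset.mem_univ x, fun j => ?_⟩
  unfold detStrategy detAux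
  have hex : ∃ z : V → A, p z ≠ 0 ∧ ∀ i : ↥(inNbr E j), z i.1 = x i.1 :=
    ⟨x, hx, fun i => rfl⟩
  rw [dif_pos hex]
  obtain ⟨hz, hzr⟩ := hex.choose_spec
  exact det j hex.choose x hz hx (fun i hi => hzr ⟨i, hi⟩) j (Finset.mem_insert_self _ _)

end Strategy

section Main

variable {V : Type} [Fintype V] [DecidableEq V] (E : V → V → Prop) [DecidableRel E]

lemma maxCorrect_facts (s : ℕ) (hs : 2 ≤ s) :
    (∃ g : V → (V → Fin s) → Fin s, IsStrategy E g ∧ maxCorrect E s = (correctSet g).card)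
    ∧ (∀ g : V → (V → Fin s) → Fin s, IsStrategy E g → (correctSet g).card ≤ maxCorrect E s)
    ∧ 1 ≤ maxCorrect E s := by
  haveI : NeZero s := ⟨by omega⟩
  set M := {m : ℕ | ∃ g : V → (V → Fin s) → Fin s, IsStrategy E g ∧ m = (correctSet g).card}
    with hMdef
  have hg0 : IsStrategy E (fun (_ : V) (_ : V → Fin s) => (0 : Fin s)) := fun j x y _ => rfl
  have hne : M.Nonempty := ⟨_, _, hg0, rfl⟩
  have hbdd : BddAbove M := by
    refine ⟨Fintype.card (V → Fin s), ?_⟩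
    rintro m ⟨g, -, rfl⟩
    exact le_trans (Finset.card_filter_le _ _) (le_of_eq Finset.card_univ)
  have hmem : maxCorrect E s ∈ M := Nat.sSup_mem hne hbdd
  refine ⟨hmem, fun g hg => le_csSup hbdd ⟨g, hg, rfl⟩, ?_⟩
  have h1 : 1 ≤ (correctSet (fun (_ : V) (_ : V → Fin s) => (0 : Fin s))).card :=
    Finset.card_pos.mpr ⟨fun _ => 0, Finset.mem_filter.mpr ⟨Finset.mem_univ _, fun j => rfl⟩⟩
  exact le_trans h1 (le_csSup hbdd ⟨_, hg0, rfl⟩)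

lemma one_lt_cast_of_two_le {s : ℕ} (hs : 2 ≤ s) : (1:ℝ) < (s:ℝ) := by
  exact_mod_cast lt_of_lt_of_le one_lt_two hs

/-- Upper bound: any admissible entropy is at most `log_s (maxCorrect)`. -/
lemma Hent_le_logb_maxCorrect (s : ℕ) (hs : 2 ≤ s) (p : (V → Fin s) → ℝ)
    (hp : IsProbDist p) (hic : InfoConstraints E s p) :
    Hent s p Finset.univ ≤ Real.logb s (maxCorrect E s) := by
  haveI : NeZero s := ⟨by omega⟩
  have hp0 := hp.1
  have hls : 0 < Real.log s := Real.log_pos (one_lt_cast_of_two_le hs)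
  have det : ∀ j : V, ∀ x y : V → Fin s, p x ≠ 0 → p y ≠ 0 →
      (∀ i ∈ inNbr E j, x i = y i) → ∀ i ∈ insert j (inNbr E j), x i = y i := by
    intro j
    have hsub : inNbr E j ⊆ insert j (inNbr E j) := Finset.subset_insert _ _
    have heq := eq_of_div_sub_eq_zero (ne_of_gt hls) (hic j)
    exact det_of_entSum_ge p hp0 hsub (le_of_eq heq)
  have hcorr : ∀ x, p x ≠ 0 → x ∈ correctSet (detStrategy E p) :=
    fun x hx => detStrategy_correct E p det x hx
  have hE : Hent s p Finset.univ = (∑ x : V → Fin s, Real.negMulLog (p x)) / Real.log s := by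
    unfold Hent
    rw [entSum_univ]
  have hsub2 : (Finset.univ.filter (fun x : V → Fin s => p x ≠ 0))
      ⊆ correctSet (detStrategy E p) :=
    fun x hxx => hcorr x (Finset.mem_filter.mp hxx).2
  have hK1 : 1 ≤ (Finset.univ.filter (fun x : V → Fin s => p x ≠ 0)).card := by
    refine Finset.card_pos.mpr ?_
    have hne1 : ∑ x : V → Fin s, p x ≠ 0 := by rw [hp.2]; exact one_ne_zero
    obtain ⟨x, -, hx⟩ := Finset.exists_ne_zero_of_sum_ne_zero hne1
    exact ⟨x, Finset.mem_filter.mpr ⟨Finset.mem_univ x, hx⟩⟩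
  have hchain : (Finset.univ.filter (fun x : V → Fin s => p x ≠ 0)).card ≤ maxCorrect E s :=
    le_trans (Finset.card_le_card hsub2)
      ((maxCorrect_facts E s hs).2.1 _ (detStrategy_isStrategy E p))
  have hlog1 : ∑ x : V → Fin s, Real.negMulLog (p x)
      ≤ Real.log ((Finset.univ.filter (fun x : V → Fin s => p x ≠ 0)).card) :=
    sum_negMulLog_le_log_card p hp0 hp.2
  have hlog2 : Real.log ((Finset.univ.filter (fun x : V → Fin s => p x ≠ 0)).card)
      ≤ Real.log (maxCorrect E s) := by
    apply Real.log_le_log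
    · exact_mod_cast hK1
    · exact_mod_cast hchain
  rw [hE, Real.logb]
  exact div_le_div_of_nonneg_right (le_trans hlog1 hlog2) hls.le

/-- Membership: the uniform distribution on a "deterministic" set gives `log_s |C|`. -/
lemma unif_mem (s : ℕ) (hs : 2 ≤ s) (C : Finset (V → Fin s)) (hC : C.Nonempty)
    (det : ∀ j : V, ∀ x ∈ C, ∀ y ∈ C, (∀ i, E i j → x i = y i) → x j = y j) :
    ∃ p : (V → Fin s) → ℝ, IsProbDist p ∧ InfoConstraints E s p ∧
      Real.logb s (C.card) = Hent s p Finset.univ := by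
  refine ⟨unif C, unif_probDist C hC, ?_, ?_⟩
  · intro j
    have detj : ∀ x y : V → Fin s, unif C x ≠ 0 → unif C y ≠ 0 →
        (∀ i ∈ inNbr E j, x i = y i) → ∀ i ∈ insert j (inNbr E j), x i = y i := by
      intro x y hx hy hagree i hi
      have hxC := (unif_ne_zero_iff C hC x).mp hx
      have hyC := (unif_ne_zero_iff C hC y).mp hy
      rcases Finset.mem_insert.mp hi with rfl | hiN
      · exact det i x hxC y hyC (fun i' hE =>
          hagree i' (Finset.mem_filter.mpr ⟨Finset.mem_univ i', hE⟩))
      · exact hagree i hiN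
    have hent := entSum_eq_of_det (unif C) (Finset.subset_insert j (inNbr E j)) detj
    unfold Hent
    rw [← hent, sub_self]
  · unfold Hent
    rw [entSum_univ, unif_entSum C hC, Real.logb]

/-- Part 1a: `E(G,s) = log_s (maxCorrect)`. -/
lemma graphEntropy_eq_logb (s : ℕ) (hs : 2 ≤ s) :
    graphEntropy E s = Real.logb s (maxCorrect E s) := by
  obtain ⟨⟨g, hg, hm⟩, hub, h1⟩ := maxCorrect_facts E s hs
  have hCne : (correctSet g).Nonempty := Finset.card_pos.mp (hm ▸ h1)
  have hdet : ∀ j : V, ∀ x ∈ correctSet g, ∀ y ∈ correctSet g,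
      (∀ i, E i j → x i = y i) → x j = y j := by
    intro j x hx y hy hagree
    have hx' := (Finset.mem_filter.mp hx).2 j
    have hy' := (Finset.mem_filter.mp hy).2 j
    rw [← hx', ← hy']
    exact hg j x y hagree
  obtain ⟨p, hp, hic, hval⟩ := unif_mem E s hs (correctSet g) hCne hdet
  have hub' : ∀ h ∈ {h : ℝ | ∃ p : (V → Fin s) → ℝ,
      IsProbDist p ∧ InfoConstraints E s p ∧ h = Hent s p Finset.univ},
      h ≤ Real.logb s (maxCorrect E s) := by
    rintro h ⟨q, hq, hqic, rfl⟩
    exact Hent_le_logb_maxCorrect E s hs q hq hqic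
  have hmem : Real.logb s (maxCorrect E s) ∈ {h : ℝ | ∃ p : (V → Fin s) → ℝ,
      IsProbDist p ∧ InfoConstraints E s p ∧ h = Hent s p Finset.univ} := by
    rw [hm]
    exact ⟨p, hp, hic, hval⟩
  refine le_antisymm (csSup_le ⟨_, hmem⟩ hub') (le_csSup ⟨_, hub'⟩ hmem)

/-- Part 1b: `g(G,s) = log_s (maxCorrect)`. -/
lemma guessingNumber_eq_logb (s : ℕ) (hs : 2 ≤ s) :
    guessingNumber E s = Real.logb s (maxCorrect E s) := by
  obtain ⟨-, -, h1⟩ := maxCorrect_facts E s hs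
  have hm0 : (0:ℝ) < (maxCorrect E s : ℝ) := by exact_mod_cast h1
  have hs0 : (0:ℝ) < (s:ℝ) := by positivity
  have hls : Real.log s ≠ 0 := ne_of_gt (Real.log_pos (one_lt_cast_of_two_le hs))
  unfold guessingNumber maxProb
  rw [Real.logb, Real.log_div (ne_of_gt hm0) (by positivity), Real.log_pow, Real.logb]
  field_simp
  ring

end Main

end RiisAux

namespace RiisAux

open Real Finset

section Index

variable {V : Type} [Fintype V] [DecidableEq V] (E : V → V → Prop) [DecidableRel E]

lemma trivialProtocol (s : ℕ) :
    IsIndexCode E (fun x : V → Fin s => x)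
      (fun (j : V) (_ : V → Fin s) (w : V → Fin s) => w j) :=
  ⟨fun _ _ _ _ _ => rfl, fun _ _ => rfl⟩

lemma entroSet_nonempty (s : ℕ) :
    {h : ℝ | ∃ (W : Type) (iW : Fintype W) (dW : DecidableEq W)
      (Φ : (V → Fin s) → W) (d : V → (V → Fin s) → W → Fin s),
      IsIndexCode E Φ d ∧ h = @protocolEntropy V (Fin s) W _ _ _ _ iW dW s Φ}.Nonempty :=
  ⟨_, (V → Fin s), inferInstance, inferInstance, _, _, trivialProtocol E s, rfl⟩

lemma lenSet_nonempty (s : ℕ) :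
    {h : ℝ | ∃ (W : Type) (iW : Fintype W) (dW : DecidableEq W)
      (Φ : (V → Fin s) → W) (d : V → (V → Fin s) → W → Fin s),
      IsIndexCode E Φ d ∧ h = @protocolLength V (Fin s) W _ _ _ iW dW s Φ}.Nonempty :=
  ⟨_, (V → Fin s), inferInstance, inferInstance, _, _, trivialProtocol E s, rfl⟩

lemma cast_pow_card (s : ℕ) :
    ((s:ℝ)) ^ (Fintype.card V) = ((Fintype.card (V → Fin s) : ℕ) : ℝ) := by
  rw [Fintype.card_fun, Fintype.card_fin]
  push_cast
  ring

lemma protocolEntropy_nonneg (s : ℕ) (hs : 2 ≤ s) (W : Type) [Fintype W] [DecidableEq W]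
    (Φ : (V → Fin s) → W) : 0 ≤ protocolEntropy s Φ := by
  have hls : 0 < Real.log s := Real.log_pos (one_lt_cast_of_two_le hs)
  apply div_nonneg _ hls.le
  refine Finset.sum_nonneg fun w _ => Real.negMulLog_nonneg (by positivity) ?_
  rw [div_le_one (by positivity)]
  calc ((Finset.univ.filter (fun x : V → Fin s => Φ x = w)).card : ℝ)
      ≤ ((Finset.univ : Finset (V → Fin s)).card : ℝ) := by
        exact_mod_cast Finset.card_filter_le _ _
  _ = ((Fintype.card (V → Fin s) : ℕ) : ℝ) := by rw [Finset.card_univ]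
  _ = (s:ℝ) ^ (Fintype.card V) := (cast_pow_card s).symm

lemma protocol_P_sum (s : ℕ) (hs : 2 ≤ s) (W : Type) [Fintype W] [DecidableEq W]
    (Φ : (V → Fin s) → W) :
    ∑ w : W, ((Finset.univ.filter (fun x : V → Fin s => Φ x = w)).card : ℝ)
      / (s:ℝ) ^ (Fintype.card V) = 1 := by
  have hpos : (0:ℝ) < (s:ℝ) ^ (Fintype.card V) := by
    have : (0:ℝ) < (s:ℝ) := by exact_mod_cast (by omega : 0 < s)
    positivity
  rw [← Finset.sum_div]
  rw [div_eq_one_iff_eq (ne_of_gt hpos)]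
  rw [cast_pow_card s]
  rw [← Nat.cast_sum]
  congr 1
  rw [← Finset.card_univ]
  exact (Finset.card_eq_sum_card_fiberwise (fun x _ => Finset.mem_univ (Φ x))).symm

lemma protocolEntropy_le_length (s : ℕ) (hs : 2 ≤ s) (W : Type) [Fintype W] [DecidableEq W]
    (Φ : (V → Fin s) → W) : protocolEntropy s Φ ≤ protocolLength s Φ := by
  have hls : 0 < Real.log s := Real.log_pos (one_lt_cast_of_two_le hs)
  have hspow : (0:ℝ) < (s:ℝ) ^ (Fintype.card V) := by
    have : (0:ℝ) < (s:ℝ) := by exact_mod_cast (by omega : 0 < s)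
    positivity
  set P : W → ℝ := fun w =>
    ((Finset.univ.filter (fun x : V → Fin s => Φ x = w)).card : ℝ)
      / (s:ℝ) ^ (Fintype.card V) with hPdef
  have hPnn : ∀ w, 0 ≤ P w := fun w => by rw [hPdef]; positivity
  have hPsum : ∑ w, P w = 1 := protocol_P_sum s hs W Φ
  have hsum_le : ∑ w, Real.negMulLog (P w)
      ≤ Real.log ((Finset.univ.filter (fun w => P w ≠ 0)).card) :=
    sum_negMulLog_le_log_card P hPnn hPsum
  have hsubset : (Finset.univ.filter (fun w => P w ≠ 0)) ⊆ Finset.univ.image Φ := by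
    intro w hw
    have hP := (Finset.mem_filter.mp hw).2
    have hc : (Finset.univ.filter (fun x : V → Fin s => Φ x = w)).card ≠ 0 := by
      intro h0
      apply hP
      rw [hPdef]
      simp only [h0, Nat.cast_zero, zero_div]
    obtain ⟨x, hx⟩ := Finset.card_pos.mp (Nat.pos_of_ne_zero hc)
    exact Finset.mem_image.mpr ⟨x, Finset.mem_univ x, (Finset.mem_filter.mp hx).2⟩
  have hpos1 : 0 < (Finset.univ.filter (fun w => P w ≠ 0)).card := by
    refine Finset.card_pos.mpr ?_
    have hne1 : ∑ w, P w ≠ 0 := by rw [hPsum]; exact one_ne_zero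
    obtain ⟨w, -, hw⟩ := Finset.exists_ne_zero_of_sum_ne_zero hne1
    exact ⟨w, Finset.mem_filter.mpr ⟨Finset.mem_univ w, hw⟩⟩
  have hlog2 : Real.log ((Finset.univ.filter (fun w => P w ≠ 0)).card)
      ≤ Real.log ((Finset.univ.image Φ).card) := by
    apply Real.log_le_log
    · exact_mod_cast hpos1
    · exact_mod_cast Finset.card_le_card hsubset
  have hPE : protocolEntropy s Φ = (∑ w, Real.negMulLog (P w)) / Real.log s := rfl
  have hPL : protocolLength s Φ
      = Real.log ((Finset.univ.image Φ).card) / Real.log s := by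
    unfold protocolLength
    rw [Real.logb]
  rw [hPE, hPL]
  exact div_le_div_of_nonneg_right (le_trans hsum_le hlog2) hls.le

/-- Any index code protocol gives `n - protocolEntropy ≤ E(G,s)`. -/
lemma protocol_entropy_ge (s : ℕ) (hs : 2 ≤ s) (W : Type) [Fintype W] [DecidableEq W]
    (Φ : (V → Fin s) → W) (d : V → (V → Fin s) → W → Fin s) (hcode : IsIndexCode E Φ d) :
    (Fintype.card V : ℝ) - protocolEntropy s Φ ≤ graphEntropy E s := by
  haveI : NeZero s := ⟨by omega⟩
  have hls : 0 < Real.log s := Real.log_pos (one_lt_cast_of_two_le hs)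
  have hspow : (0:ℝ) < (s:ℝ) ^ (Fintype.card V) := by
    have : (0:ℝ) < (s:ℝ) := by exact_mod_cast (by omega : 0 < s)
    positivity
  set x₀ : V → Fin s := fun _ => 0 with hx₀
  set c : W → ℕ := fun w => (Finset.univ.filter (fun x : V → Fin s => Φ x = w)).card
    with hcdef
  obtain ⟨wstar, -, hmax⟩ := Finset.exists_max_image (Finset.univ : Finset W) c
    ⟨Φ x₀, Finset.mem_univ _⟩
  have hk1 : 1 ≤ c wstar := by
    refine le_trans ?_ (hmax (Φ x₀) (Finset.mem_univ _))
    rw [hcdef]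
    exact Finset.card_pos.mpr ⟨x₀, Finset.mem_filter.mpr ⟨Finset.mem_univ _, rfl⟩⟩
  have hF : (Finset.univ.filter (fun x : V → Fin s => Φ x = wstar)).Nonempty :=
    Finset.card_pos.mp hk1
  have det : ∀ j : V, ∀ x ∈ (Finset.univ.filter (fun x : V → Fin s => Φ x = wstar)),
      ∀ y ∈ (Finset.univ.filter (fun x : V → Fin s => Φ x = wstar)),
      (∀ i, E i j → x i = y i) → x j = y j := by
    intro j x hx y hy hagree
    have hfx : Φ x = wstar := (Finset.mem_filter.mp hx).2
    have hfy : Φ y = wstar := (Finset.mem_filter.mp hy).2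
    calc x j = d j x (Φ x) := (hcode.2 x j).symm
    _ = d j x wstar := by rw [hfx]
    _ = d j y wstar := hcode.1 j x y wstar hagree
    _ = d j y (Φ y) := by rw [hfy]
    _ = y j := hcode.2 y j
  obtain ⟨p, hp, hic, hval⟩ := unif_mem E s hs _ hF det
  have hbdd : BddAbove {h : ℝ | ∃ p : (V → Fin s) → ℝ,
      IsProbDist p ∧ InfoConstraints E s p ∧ h = Hent s p Finset.univ} := by
    refine ⟨Real.logb s (maxCorrect E s), ?_⟩
    rintro h ⟨q, hq, hqic, rfl⟩
    exact Hent_le_logb_maxCorrect E s hs q hq hqic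
  have hle1 : Real.logb s (c wstar) ≤ graphEntropy E s :=
    le_csSup hbdd ⟨p, hp, hic, hval⟩
  -- entropy lower bound
  set P : W → ℝ := fun w => ((c w : ℝ)) / (s:ℝ) ^ (Fintype.card V) with hPdef
  have hPnn : ∀ w, 0 ≤ P w := fun w => by rw [hPdef]; positivity
  have hPsum : ∑ w, P w = 1 := protocol_P_sum s hs W Φ
  have hM : 0 < P wstar := by
    rw [hPdef]
    have : (0:ℝ) < (c wstar : ℝ) := by exact_mod_cast hk1
    positivity
  have hPle : ∀ w, P w ≤ P wstar := by
    intro w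
    rw [hPdef]
    have : (c w : ℝ) ≤ (c wstar : ℝ) := by exact_mod_cast hmax w (Finset.mem_univ w)
    exact div_le_div_of_nonneg_right this hspow.le
  have hmin : -Real.log (P wstar) ≤ ∑ w, Real.negMulLog (P w) :=
    neg_log_max_le_sum_negMulLog P hPnn hPsum hM hPle
  have hPE : protocolEntropy s Φ = (∑ w, Real.negMulLog (P w)) / Real.log s := rfl
  have hc0 : (0:ℝ) < (c wstar : ℝ) := by exact_mod_cast hk1
  have hlogP : Real.log (P wstar)
      = Real.log (c wstar) - (Fintype.card V : ℝ) * Real.log s := by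
    rw [hPdef]
    rw [Real.log_div (ne_of_gt hc0) (ne_of_gt hspow), Real.log_pow]
  have key : ((Fintype.card V : ℝ) * Real.log s - Real.log (c wstar)) / Real.log s
      ≤ protocolEntropy s Φ := by
    rw [hPE]
    refine div_le_div_of_nonneg_right ?_ hls.le
    calc (Fintype.card V : ℝ) * Real.log s - Real.log (c wstar)
        = -(Real.log (P wstar)) := by rw [hlogP]; ring
    _ ≤ ∑ w, Real.negMulLog (P w) := hmin
  have harith : ((Fintype.card V : ℝ) * Real.log s - Real.log (c wstar)) / Real.log s
      = (Fintype.card V : ℝ) - Real.log (c wstar) / Real.log s := by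
    field_simp
  have hlogb : Real.logb s (c wstar) = Real.log (c wstar) / Real.log s := by
    rw [Real.logb]
  linarith [key, harith.symm ▸ key, hle1, hlogb ▸ hle1]

lemma part2 (s : ℕ) (hs : 2 ≤ s) :
    (Fintype.card V : ℝ) - indexCodeEntro E s ≤ graphEntropy E s := by
  have hlb : ∀ h ∈ {h : ℝ | ∃ (W : Type) (iW : Fintype W) (dW : DecidableEq W)
      (Φ : (V → Fin s) → W) (d : V → (V → Fin s) → W → Fin s),
      IsIndexCode E Φ d ∧ h = @protocolEntropy V (Fin s) W _ _ _ _ iW dW s Φ},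
      (Fintype.card V : ℝ) - graphEntropy E s ≤ h := by
    rintro h ⟨W, iW, dW, Φ, d, hcode, rfl⟩
    have := protocol_entropy_ge E s hs W Φ d hcode
    linarith
  have h := le_csInf (entroSet_nonempty E s) hlb
  have hInf : indexCodeEntro E s = sInf {h : ℝ | ∃ (W : Type) (iW : Fintype W)
      (dW : DecidableEq W) (Φ : (V → Fin s) → W) (d : V → (V → Fin s) → W → Fin s),
      IsIndexCode E Φ d ∧ h = @protocolEntropy V (Fin s) W _ _ _ _ iW dW s Φ} := rfl
  rw [hInf]
  linarith

lemma entroSet_bddBelow (s : ℕ) (hs : 2 ≤ s) :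
    BddBelow {h : ℝ | ∃ (W : Type) (iW : Fintype W) (dW : DecidableEq W)
      (Φ : (V → Fin s) → W) (d : V → (V → Fin s) → W → Fin s),
      IsIndexCode E Φ d ∧ h = @protocolEntropy V (Fin s) W _ _ _ _ iW dW s Φ} := by
  refine ⟨0, ?_⟩
  rintro h ⟨W, iW, dW, Φ, d, -, rfl⟩
  exact protocolEntropy_nonneg s hs W Φ

lemma part3 (s : ℕ) (hs : 2 ≤ s) : indexCodeEntro E s ≤ indexCodeLen E s := by
  refine le_csInf (lenSet_nonempty E s) ?_
  rintro h ⟨W, iW, dW, Φ, d, hcode, rfl⟩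
  have h1 : indexCodeEntro E s ≤ protocolEntropy s Φ :=
    csInf_le (entroSet_bddBelow E s hs) ⟨W, iW, dW, Φ, d, hcode, rfl⟩
  have h2 : protocolEntropy s Φ ≤ protocolLength s Φ :=
    protocolEntropy_le_length s hs W Φ
  linarith

end Index

end RiisAux

/-- `g(G,s) = E(G,s) ≥ E^public(G,s) ≥ g^public(G,s)`, where
`E^public(G,s) = n − i_entro(G,s)` and `g^public(G,s) = n − i(G,s)`. -/
theorem guessing_eq_entropy_ge_public {V : Type} [Fintype V] [DecidableEq V]
    (E : V → V → Prop) [DecidableRel E] (s : ℕ) (hs : 2 ≤ s) :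
    guessingNumber E s = graphEntropy E s
    ∧ (Fintype.card V : ℝ) - indexCodeEntro E s ≤ graphEntropy E s
    ∧ (Fintype.card V : ℝ) - indexCodeLen E s
        ≤ (Fintype.card V : ℝ) - indexCodeEntro E s := by
  refine ⟨?_, ?_, ?_⟩
  · rw [RiisAux.guessingNumber_eq_logb E s hs, RiisAux.graphEntropy_eq_logb E s hs]
  · exact RiisAux.part2 E s hs
  · have := RiisAux.part3 E s hs
    linarith
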